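/- 0 is a minimizer of the function f(y) = λw‖y‖₂ − zᵀy + (ρ/2)‖y‖₂² if and only if ‖z‖₂ ≤ λw. -/

import Mathlib

open scoped RealInnerProductSpace

/-- `0` minimizes `f(y) = λw‖y‖₂ − zᵀy + (ρ/2)‖y‖₂²` iff `‖z‖₂ ≤ λw`. -/
theorem zero_minimizer_iff (q : ℕ) (z : EuclideanSpace ℝ (Fin q))
    (lam w ρ : ℝ) (hlam : 0 < lam) (hw : 0 < w) (hρ : 0 < ρ) :
    (∀ y : EuclideanSpace ℝ (Fin q),
        lam * w * ‖(0 : EuclideanSpace ℝ (Fin q))‖ - ⟪z, (0 : EuclideanSpace ℝ (Fin q))⟫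
          + (ρ / 2) * ‖(0 : EuclideanSpace ℝ (Fin q))‖ ^ 2
        ≤ lam * w * ‖y‖ - ⟪z, y⟫ + (ρ / 2) * ‖y‖ ^ 2) ↔ ‖z‖ ≤ lam * w := by
  constructor
  · intro h
    by_contra hc
    push_neg at hc
    have hz : 0 < ‖z‖ := lt_trans (by positivity) hc
    set t : ℝ := (‖z‖ - lam * w) / (ρ * ‖z‖) with ht
    have htpos : 0 < t := by
      apply div_pos (by linarith) (by positivity)
    have := h (t • z)
    simp only [norm_zero, inner_zero_right, norm_smul, Real.norm_eq_abs,
      abs_of_pos htpos, real_inner_smul_right, real_inner_self_eq_norm_sq] at this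
    -- this : 0 ≤ lam * w * (t * ‖z‖) - t * ‖z‖^2 + ρ/2 * (t*‖z‖)^2
    have hts : t * (ρ * ‖z‖) = ‖z‖ - lam * w := by
      rw [ht]; exact div_mul_cancel₀ _ (mul_pos hρ hz).ne'
    nlinarith [sq_nonneg ‖z‖, mul_pos htpos hz]
  · intro h y
    have h1 : ⟪z, y⟫ ≤ ‖z‖ * ‖y‖ := real_inner_le_norm z y
    have h2 : ‖z‖ * ‖y‖ ≤ lam * w * ‖y‖ :=
      mul_le_mul_of_nonneg_right h (norm_nonneg y)
    have h3 : 0 ≤ (ρ / 2) * ‖y‖ ^ 2 := by positivity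
    simp only [norm_zero, inner_zero_right]
    nlinarith
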